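/- Let Γ = {(y,𝒜(y)) : y ∈ ℝ^n} ⊂ ℝ^d be a Lipschitz graph with Lip(𝒜) < 1, μ := ℋ^n_Γ. Fix x ∈ Γ, a cube R_j with ℓ(R_j) < 2^{−k+1} intersecting supp μ within its slight contraction, and let θ^j_k(x′) be the indicator that R_j meets the boundary of the annulus A(x′, 2^{−k−1}, 2^{−k}). Then ∫ θ^j_k dμ ≤ C ℓ(R_j) 2^{−k(n−1)}, with C depending only on n, d, and Lip(𝒜). -/

import Mathlib

set_option maxHeartbeats 1000000


open MeasureTheory Metric Set
open scoped NNReal ENNReal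

/-- Projection onto the first `n` coordinates of `ℝ^{n+m}`. -/
noncomputable def piH (n m : ℕ) (x : EuclideanSpace ℝ (Fin (n + m))) :
    EuclideanSpace ℝ (Fin n) :=
  (WithLp.equiv 2 (Fin n → ℝ)).symm (fun i => x (Fin.castAdd m i))

/-- Projection onto the last `m` coordinates of `ℝ^{n+m}`. -/
noncomputable def piV (n m : ℕ) (x : EuclideanSpace ℝ (Fin (n + m))) :
    EuclideanSpace ℝ (Fin m) :=
  (WithLp.equiv 2 (Fin m → ℝ)).symm (fun i => x (Fin.natAdd n i))

/-- The closed axis-parallel cube in `ℝ^{d'}` with center `c` and side length `l`. -/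
def cube (d' : ℕ) (c : EuclideanSpace ℝ (Fin d')) (l : ℝ) : Set (EuclideanSpace ℝ (Fin d')) :=
  {y | ∀ i, |y i - c i| ≤ l / 2}


noncomputable def Phi {n m : ℕ} (A : EuclideanSpace ℝ (Fin n) → EuclideanSpace ℝ (Fin m))
    (y : EuclideanSpace ℝ (Fin n)) : EuclideanSpace ℝ (Fin (n + m)) :=
  (WithLp.equiv 2 (Fin (n + m) → ℝ)).symm
    (fun i => Fin.addCases (fun j => y j) (fun j => A y j) i)

section Aux
variable {n m : ℕ} {A : EuclideanSpace ℝ (Fin n) → EuclideanSpace ℝ (Fin m)}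

lemma piH_phi (y : EuclideanSpace ℝ (Fin n)) : piH n m (Phi A y) = y := by
  ext j
  simp [piH, Phi]

lemma piV_phi (y : EuclideanSpace ℝ (Fin n)) : piV n m (Phi A y) = A y := by
  ext j
  simp [piV, Phi]

lemma phi_piH {x : EuclideanSpace ℝ (Fin (n + m))} (hx : piV n m x = A (piH n m x)) :
    Phi A (piH n m x) = x := by
  ext i
  refine Fin.addCases (fun j => ?_) (fun j => ?_) i
  · simp [Phi]
    rfl
  · simp only [Phi, WithLp.equiv_symm_apply, WithLp.ofLp_toLp, Fin.addCases_right]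
    rw [← hx]; rfl

lemma dist_sq_split (x y : EuclideanSpace ℝ (Fin (n + m))) :
    dist x y ^ 2 = dist (piH n m x) (piH n m y) ^ 2 + dist (piV n m x) (piV n m y) ^ 2 := by
  rw [EuclideanSpace.dist_eq, EuclideanSpace.dist_eq, EuclideanSpace.dist_eq,
    Real.sq_sqrt (by positivity), Real.sq_sqrt (by positivity), Real.sq_sqrt (by positivity)]
  rw [Fin.sum_univ_add (f := fun i => dist (x i) (y i) ^ 2)]
  rfl

lemma dist_phi_sq (y z : EuclideanSpace ℝ (Fin n)) :
    dist (Phi A y) (Phi A z) ^ 2 = dist y z ^ 2 + dist (A y) (A z) ^ 2 := by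
  rw [dist_sq_split (Phi A y) (Phi A z), piH_phi, piH_phi, piV_phi, piV_phi]

end Aux
lemma le_of_sq_le_sq' {a b : ℝ} (hb : 0 ≤ b) (h : a ^ 2 ≤ b ^ 2) : a ≤ b := by
  have h2 := Real.sqrt_le_sqrt h
  rw [Real.sqrt_sq_eq_abs, Real.sqrt_sq hb] at h2
  exact (le_abs_self a).trans h2

lemma one_sub_pow_le (x : ℝ) (h0 : 0 ≤ x) (h1 : x ≤ 1) (n : ℕ) :
    1 - x ^ n ≤ n * (1 - x) := by
  induction n with
  | zero => simp
  | succ k ih =>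
    have hxk : x ^ k ≤ 1 := pow_le_one₀ h0 h1
    have : x * (1 - x ^ k) ≤ 1 * (1 - x ^ k) :=
      mul_le_mul_of_nonneg_right h1 (by linarith)
    push_cast
    calc 1 - x ^ (k + 1) = (1 - x) + x * (1 - x ^ k) := by ring
    _ ≤ (1 - x) + (1 - x ^ k) := by linarith
    _ ≤ (1 - x) + k * (1 - x) := by linarith
    _ = (k + 1) * (1 - x) := by ring

section C
variable {n m : ℕ} {A : EuclideanSpace ℝ (Fin n) → EuclideanSpace ℝ (Fin m)} {L : ℝ≥0}

lemma dist_le_dist_phi (y z : EuclideanSpace ℝ (Fin n)) :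
    dist y z ≤ dist (Phi A y) (Phi A z) := by
  apply le_of_sq_le_sq' dist_nonneg
  rw [dist_phi_sq]
  nlinarith [sq_nonneg (dist (A y) (A z))]

lemma lip_phi (hA : LipschitzWith L A) :
    LipschitzWith (NNReal.sqrt (1 + L ^ 2)) (Phi A) := by
  apply LipschitzWith.of_dist_le_mul
  intro y z
  apply le_of_sq_le_sq' (by positivity)
  rw [mul_pow, dist_phi_sq, Real.coe_sqrt, Real.sq_sqrt (by positivity)]
  have h1 := hA.dist_le_mul y z
  have h2 : (0:ℝ) ≤ L := L.coe_nonneg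
  push_cast
  nlinarith [(dist_nonneg : (0:ℝ) ≤ dist (A y) (A z)), (dist_nonneg : (0:ℝ) ≤ dist y z)]

/-- Key pointwise scaling estimate. -/
lemma key_scale (hA : LipschitzWith L A) (hL : (L : ℝ) < 1)
    (y₀ y : EuclideanSpace ℝ (Fin n)) (t : ℝ) (h0 : 0 ≤ t) (h1 : t ≤ 1) :
    dist (Phi A (y₀ + t • (y - y₀))) (Phi A y₀) ^ 2 ≤
      (t ^ 2 + (1 - t ^ 2) * (2 * (L:ℝ)^2 / (1 + (L:ℝ)^2))) * dist (Phi A y) (Phi A y₀) ^ 2 := by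
  set q : ℝ := 2 * (L:ℝ)^2 / (1 + (L:ℝ)^2) with hqdef
  have hLnn : (0:ℝ) ≤ L := L.coe_nonneg
  have hden : (0:ℝ) < 1 + (L:ℝ)^2 := by positivity
  have hq : q * (1 + (L:ℝ)^2) = 2 * (L:ℝ)^2 := by
    rw [hqdef]; field_simp
  set s := dist y y₀ with hs
  set g1 := dist (A y) (A y₀) with hg1def
  set gl := dist (A (y₀ + t • (y - y₀))) (A y₀) with hgldef
  have hsnn : 0 ≤ s := dist_nonneg
  have hg1nn : 0 ≤ g1 := dist_nonneg
  have hglnn : 0 ≤ gl := dist_nonneg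
  have hdyl : dist (y₀ + t • (y - y₀)) y₀ = t * s := by
    rw [dist_eq_norm, add_sub_cancel_left, norm_smul, Real.norm_eq_abs, abs_of_nonneg h0,
      hs, dist_eq_norm]
  have hdyy : dist (y₀ + t • (y - y₀)) y = (1 - t) * s := by
    rw [dist_eq_norm, hs, dist_eq_norm]
    have : y₀ + t • (y - y₀) - y = -((1 - t) • (y - y₀)) := by
      rw [smul_sub, smul_sub]; module
    rw [this, norm_neg, norm_smul, Real.norm_eq_abs, abs_of_nonneg (by linarith)]
  have hg1 : g1 ≤ (L:ℝ) * s := by simpa [hs] using hA.dist_le_mul y y₀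
  have hgl : gl ≤ (L:ℝ) * (t * s) := by
    have := hA.dist_le_mul (y₀ + t • (y - y₀)) y₀
    rwa [hdyl] at this
  have hdiff : gl ≤ g1 + (L:ℝ) * ((1 - t) * s) := by
    have htri := dist_triangle (A (y₀ + t • (y - y₀))) (A y) (A y₀)
    have := hA.dist_le_mul (y₀ + t • (y - y₀)) y
    rw [hdyy] at this
    rw [hgldef, hg1def]; linarith
  -- step 1 : gl^2 ≤ g1^2 + L^2 (1-t^2) s^2
  have step1 : gl ^ 2 ≤ g1 ^ 2 + (L:ℝ)^2 * (1 - t^2) * s^2 := by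
    rcases le_or_gt gl g1 with h | h
    · have : gl ^ 2 ≤ g1 ^ 2 := by nlinarith
      nlinarith [mul_nonneg (mul_nonneg (sq_nonneg (L:ℝ)) (by nlinarith : (0:ℝ) ≤ 1 - t^2)) (sq_nonneg s)]
    · have hfac : (gl - g1) * (gl + g1) ≤ ((L:ℝ) * ((1 - t) * s)) * ((L:ℝ) * (t * s) + (L:ℝ) * s) := by
        apply mul_le_mul (by linarith) (by linarith) (by linarith) ?_
        have : (0:ℝ) ≤ (1 - t) * s := mul_nonneg (by linarith) hsnn
        exact mul_nonneg hLnn this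
      nlinarith [hfac]
  have hX : g1 ^ 2 ≤ (L:ℝ)^2 * s^2 := by nlinarith [hg1, hg1nn, mul_nonneg hLnn hsnn]
  have hXfac : 0 ≤ q * (s^2 + g1^2) - g1^2 - (L:ℝ)^2 * s^2 := by
    have he : q * (s^2 + g1^2) - g1^2 - (L:ℝ)^2 * s^2
        = (1 - (L:ℝ)^2) * ((L:ℝ)^2 * s^2 - g1^2) / (1 + (L:ℝ)^2) := by
      rw [hqdef]; field_simp; ring
    rw [he]
    apply div_nonneg ?_ hden.le
    exact mul_nonneg (by nlinarith) (by linarith [hX])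
  rw [dist_phi_sq, dist_phi_sq, hdyl, ← hs, ← hg1def, ← hgldef]
  have ht2 : (0:ℝ) ≤ 1 - t^2 := by nlinarith
  have hid : (t^2 + (1-t^2)*q)*(s^2+g1^2) - ((t*s)^2 + gl^2)
      = (1-t^2)*(q*(s^2+g1^2) - g1^2 - (L:ℝ)^2*s^2)
        + (g1^2 + (L:ℝ)^2*(1-t^2)*s^2 - gl^2) := by ring
  linarith [mul_nonneg ht2 hXfac, step1, hid]
end C

lemma hausdorff_le_const_vol (n : ℕ) :
    ∃ K : ℝ≥0∞, K ≠ ∞ ∧ ∀ s : Set (EuclideanSpace ℝ (Fin n)), MeasurableSet s →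
      μH[(n:ℝ)] s ≤ K * volume s := by
  set e := WithLp.equiv 2 (Fin n → ℝ) with he
  set K0 : ℝ≥0 := (Fintype.card (Fin n) : ℝ≥0) ^ (1 / (2:ℝ≥0∞)).toReal with hK0
  have hlip : LipschitzWith K0 e.symm :=
    (PiLp.antilipschitzWith_ofLp 2 (fun _ : Fin n => ℝ)).to_rightInverse e.right_inv
  refine ⟨(K0 : ℝ≥0∞) ^ (n:ℝ), ?_, fun s hs => ?_⟩
  · exact (ENNReal.rpow_lt_top_of_nonneg (by positivity) ENNReal.coe_ne_top).ne
  · have h1 : μH[(n:ℝ)] s = μH[(n:ℝ)] (e.symm '' (e '' s)) := by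
      rw [Equiv.symm_image_image]
    have h2 := hlip.hausdorffMeasure_image_le (by positivity : (0:ℝ) ≤ (n:ℝ)) (⇑e '' s)
    have h3 : (μH[(n:ℝ)] : Measure (Fin n → ℝ)) = volume := by
      have hc : ((Fintype.card (Fin n)) : ℝ) = (n : ℝ) := by simp
      rw [← hc, hausdorffMeasure_pi_real]
    have h4 : (volume : Measure (Fin n → ℝ)) (⇑e '' s) = volume s := by
      rw [Equiv.image_eq_preimage_symm]
      exact (PiLp.volume_preserving_toLp (Fin n)).measure_preimage
        hs.nullMeasurableSet
    rw [h1]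
    calc μH[(n:ℝ)] (e.symm '' (e '' s)) ≤ (K0 : ℝ≥0∞) ^ (n:ℝ) * μH[(n:ℝ)] (⇑e '' s) := h2
    _ = (K0 : ℝ≥0∞) ^ (n:ℝ) * volume s := by rw [h3, h4]

section VolT
variable {n m : ℕ} {A : EuclideanSpace ℝ (Fin n) → EuclideanSpace ℝ (Fin m)} {L : ℝ≥0}

lemma volT (hn : 1 ≤ n) (hA : LipschitzWith L A) (hL : L < 1) :
    ∃ CT > (0:ℝ), ∀ u : EuclideanSpace ℝ (Fin (n + m)), piV n m u = A (piH n m u) →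
      ∀ r D : ℝ, 0 < r → 0 < D →
      volume {y : EuclideanSpace ℝ (Fin n) |
          r - D ≤ dist (Phi A y) u ∧ dist (Phi A y) u ≤ r + D}
        ≤ ENNReal.ofReal (CT * (D * (r + D) ^ (n - 1))) := by
  have hL' : (L:ℝ) < 1 := hL
  have hLnn : (0:ℝ) ≤ L := L.coe_nonneg
  set q : ℝ := 2 * (L:ℝ)^2 / (1 + (L:ℝ)^2) with hqdef
  have hq0 : 0 ≤ q := by positivity
  have hq1 : q < 1 := by
    rw [hqdef, div_lt_one (by positivity)]; nlinarith
  set sq : ℝ := Real.sqrt q with hsqdef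
  have hsq0 : 0 ≤ sq := Real.sqrt_nonneg q
  have hsqq : sq ^ 2 = q := Real.sq_sqrt hq0
  have hsq1 : sq < 1 := by nlinarith
  set ε : ℝ := (1 - sq) / 4 with hεdef
  have hε : 0 < ε := by rw [hεdef]; linarith
  have hε4 : ε ≤ 1 / 4 := by rw [hεdef]; linarith
  set ω : ℝ≥0∞ := volume (closedBall (0 : EuclideanSpace ℝ (Fin n)) 1) with hωdef
  have hωfin : ω ≠ ∞ := measure_closedBall_lt_top.ne
  set ωr : ℝ := ω.toReal with hωrdef
  have hωr0 : 0 ≤ ωr := ENNReal.toReal_nonneg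
  refine ⟨6*n*ωr/(1-q) + (1+ε)/ε*ωr + 1, ?_, ?_⟩
  · have h1 : 0 ≤ 6*(n:ℝ)*ωr/(1-q) := div_nonneg (by positivity) (by linarith)
    have h2 : 0 ≤ (1+ε)/ε*ωr := by positivity
    linarith
  intro u hu r D hr hD
  set CT : ℝ := 6*n*ωr/(1-q) + (1+ε)/ε*ωr + 1 with hCT
  set y₀ := piH n m u with hy₀
  have hu' : Phi A y₀ = u := phi_piH hu
  set b : ℝ := r + D with hbdef
  have hb : 0 < b := by positivity
  have hcont : Continuous fun y : EuclideanSpace ℝ (Fin n) => dist (Phi A y) u :=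
    ((lip_phi hA).continuous).dist continuous_const
  set Ab := {y : EuclideanSpace ℝ (Fin n) | dist (Phi A y) u ≤ b} with hAb
  have hmeasAb : MeasurableSet Ab := (isClosed_le hcont continuous_const).measurableSet
  have hAbball : Ab ⊆ closedBall y₀ b := by
    intro y hy
    rw [mem_closedBall]
    calc dist y y₀ ≤ dist (Phi A y) (Phi A y₀) := dist_le_dist_phi y y₀
    _ = dist (Phi A y) u := by rw [hu']
    _ ≤ b := hy
  have hAbfin : volume Ab ≠ ∞ :=
    ((measure_mono hAbball).trans_lt measure_closedBall_lt_top).ne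
  have hAbvol : volume Ab ≤ ENNReal.ofReal (b ^ n * ωr) := by
    calc volume Ab ≤ volume (closedBall y₀ b) := measure_mono hAbball
    _ = ENNReal.ofReal (b ^ Module.finrank ℝ (EuclideanSpace ℝ (Fin n))) * ω :=
        Measure.addHaar_closedBall' volume y₀ hb.le
    _ = ENNReal.ofReal (b ^ n * ωr) := by
        rw [finrank_euclideanSpace_fin, ← ENNReal.ofReal_toReal hωfin, ← hωrdef,
          ← ENNReal.ofReal_mul (by positivity)]
  set T := {y : EuclideanSpace ℝ (Fin n) |
      r - D ≤ dist (Phi A y) u ∧ dist (Phi A y) u ≤ r + D} with hT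
  have hTAb : T ⊆ Ab := fun y hy => hy.2
  have hDP : 0 ≤ D * b ^ (n - 1) := by positivity
  have hbpow : b ^ n = b ^ (n - 1) * b := by
    conv_lhs => rw [← Nat.sub_add_cancel hn, pow_succ]
  by_cases hcase : D ≤ ε * r
  · -- annulus case
    set a₀ : ℝ := r - 2*D with ha₀def
    have ha₀ : 0 < a₀ := by
      have : 2*D ≤ 2*(ε*r) := by linarith
      have : 2*(ε*r) ≤ r/2 := by nlinarith
      rw [ha₀def]; linarith
    have ha₀b : a₀ ≤ b := by rw [ha₀def, hbdef]; linarith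
    have hsb : sq * b ≤ a₀ := by
      have h1 : sq * (1 + ε) ≤ 1 - 2*ε := by nlinarith [mul_nonneg (sub_nonneg.2 hsq1.le) (by linarith : (0:ℝ) ≤ 2 - sq)]
      have h2 : (1 - 2*ε) * r ≤ a₀ := by rw [ha₀def]; nlinarith
      have h3 : b ≤ (1 + ε) * r := by rw [hbdef]; nlinarith
      calc sq * b ≤ sq * ((1 + ε) * r) := mul_le_mul_of_nonneg_left h3 hsq0
      _ = (sq * (1 + ε)) * r := by ring
      _ ≤ (1 - 2*ε) * r := mul_le_mul_of_nonneg_right h1 hr.le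
      _ ≤ a₀ := h2
    have key2 : q * b^2 ≤ a₀^2 := by
      have : (sq * b)^2 ≤ a₀^2 := pow_le_pow_left₀ (by positivity) hsb 2
      nlinarith [this]
    have hden2 : (0:ℝ) < (1-q) * b^2 := by
      apply mul_pos (by linarith) (by positivity)
    set lam : ℝ := Real.sqrt ((a₀^2 - q*b^2)/((1-q)*b^2)) with hlamdef
    have hlam0 : 0 ≤ lam := Real.sqrt_nonneg _
    have hlamsq : lam^2 = (a₀^2 - q*b^2)/((1-q)*b^2) :=
      Real.sq_sqrt (div_nonneg (by linarith) hden2.le)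
    have hlam1 : lam ≤ 1 := by
      apply le_of_sq_le_sq' zero_le_one
      rw [one_pow, hlamsq, div_le_one hden2]
      nlinarith [pow_le_pow_left₀ ha₀.le ha₀b 2]
    have hl2 : lam^2 * ((1-q)*b^2) = a₀^2 - q*b^2 := by
      rw [hlamsq]; exact div_mul_cancel₀ _ hden2.ne'
    have hbeta : (lam^2 + (1-lam^2)*q) * b^2 = a₀^2 := by linear_combination hl2
    set A0 := {y : EuclideanSpace ℝ (Fin n) | dist (Phi A y) u ≤ a₀} with hA0
    have hmeasA0 : MeasurableSet A0 := (isClosed_le hcont continuous_const).measurableSet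
    have hA0Ab : A0 ⊆ Ab := fun y hy => le_trans hy ha₀b
    have hA0fin : volume A0 ≠ ∞ := ((measure_mono hA0Ab).trans_lt hAbfin.lt_top).ne
    have hincl : (AffineMap.homothety y₀ lam) '' Ab ⊆ A0 := by
      rintro _ ⟨y, hy, rfl⟩
      have hk := key_scale hA hL' y₀ y lam hlam0 hlam1
      rw [hu'] at hk
      have heq : AffineMap.homothety y₀ lam y = y₀ + lam • (y - y₀) := by
        rw [AffineMap.homothety_apply]
        simp only [vsub_eq_sub, vadd_eq_add]
        exact add_comm _ _
      rw [hA0, mem_setOf_eq, heq]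
      apply le_of_sq_le_sq' ha₀.le
      calc dist (Phi A (y₀ + lam • (y - y₀))) u ^ 2
          ≤ (lam^2 + (1-lam^2)*q) * dist (Phi A y) u ^ 2 := hk
      _ ≤ (lam^2 + (1-lam^2)*q) * b^2 := by
          apply mul_le_mul_of_nonneg_left ?_ ?_
          · exact pow_le_pow_left₀ dist_nonneg hy 2
          · have hlam21 : lam^2 ≤ 1 := pow_le_one₀ hlam0 hlam1
            have := mul_nonneg (by linarith : (0:ℝ) ≤ 1 - lam^2) hq0
            positivity
      _ = a₀^2 := hbeta
    have h5 : ENNReal.ofReal (lam^n) * volume Ab ≤ volume A0 := by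
      have := measure_mono hincl (μ := volume)
      rw [Measure.addHaar_image_homothety, finrank_euclideanSpace_fin,
        abs_of_nonneg (pow_nonneg hlam0 n)] at this
      exact this
    have h6 : volume T ≤ volume Ab - volume A0 := by
      have hTd : T ⊆ Ab \ A0 := by
        intro y hy
        refine ⟨hTAb hy, fun hcon => ?_⟩
        have h1 : r - D ≤ dist (Phi A y) u := hy.1
        have h2 : dist (Phi A y) u ≤ a₀ := hcon
        rw [ha₀def] at h2; linarith
      calc volume T ≤ volume (Ab \ A0) := measure_mono hTd
      _ = volume Ab - volume A0 := measure_diff hA0Ab hmeasA0.nullMeasurableSet hA0fin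
    have hlamn1 : lam^n ≤ 1 := pow_le_one₀ hlam0 hlam1
    have h7 : volume T ≤ ENNReal.ofReal (1 - lam^n) * volume Ab := by
      refine h6.trans ?_
      refine (tsub_le_tsub_left h5 _).trans ?_
      rw [tsub_le_iff_right]
      have hsum : ENNReal.ofReal (1 - lam^n) * volume Ab + ENNReal.ofReal (lam^n) * volume Ab
          = volume Ab := by
        rw [← add_mul, ← ENNReal.ofReal_add (by linarith) (by positivity), sub_add_cancel,
          ENNReal.ofReal_one, one_mul]
      exact le_of_eq hsum.symm
    -- real estimates
    have h8 : (1 - lam^2) * ((1-q) * b^2) = b^2 - a₀^2 := by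
      linear_combination (-1 : ℝ) * hl2
    have h8b : b^2 - a₀^2 ≤ 6 * D * b := by
      rw [hbdef, ha₀def]; nlinarith
    have h9 : (1 - lam^2) * b * (1 - q) ≤ 6 * D := by
      have h9' : (1 - lam^2) * b * (1-q) * b ≤ 6 * D * b := by
        have h9'' : (1 - lam^2) * b * (1-q) * b = b^2 - a₀^2 := by linear_combination h8
        linarith
      exact le_of_mul_le_mul_right (by linarith [h9']) hb
    have h10 : (1 - lam^n) * b ≤ (n:ℝ) * (6 * D) / (1 - q) := by
      have h7' : 1 - lam^n ≤ (n:ℝ) * (1 - lam^2) := by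
        have hx := one_sub_pow_le lam hlam0 hlam1 n
        have hll : lam^2 ≤ lam := by
          rw [pow_two]; exact mul_le_of_le_one_right hlam0 hlam1
        have h2 := mul_le_mul_of_nonneg_left
          (by linarith : 1 - lam ≤ 1 - lam^2) (by positivity : (0:ℝ) ≤ (n:ℝ))
        linarith
      rw [le_div_iff₀ (by linarith : (0:ℝ) < 1 - q)]
      calc (1 - lam^n) * b * (1-q) ≤ (n:ℝ) * (1 - lam^2) * b * (1-q) := by
            apply mul_le_mul_of_nonneg_right ?_ (by linarith)
            apply mul_le_mul_of_nonneg_right h7' hb.le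
      _ = (n:ℝ) * ((1 - lam^2) * b * (1-q)) := by ring
      _ ≤ (n:ℝ) * (6 * D) := by
            apply mul_le_mul_of_nonneg_left h9 (by positivity)
    have hreal : (1 - lam^n) * (b^n * ωr) ≤ CT * (D * b^(n-1)) := by
      have hnn : 0 ≤ 1 - lam^n := by linarith
      calc (1 - lam^n) * (b^n * ωr) = ((1 - lam^n) * b) * (b^(n-1) * ωr) := by
            rw [hbpow]; ring
      _ ≤ ((n:ℝ) * (6 * D) / (1 - q)) * (b^(n-1) * ωr) := by
            apply mul_le_mul_of_nonneg_right h10 (by positivity)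
      _ = (6*n*ωr/(1-q)) * (D * b^(n-1)) := by ring
      _ ≤ CT * (D * b^(n-1)) := by
            apply mul_le_mul_of_nonneg_right ?_ hDP
            rw [hCT]
            have : 0 ≤ (1+ε)/ε*ωr := by positivity
            linarith
    calc volume T ≤ ENNReal.ofReal (1 - lam^n) * volume Ab := h7
    _ ≤ ENNReal.ofReal (1 - lam^n) * ENNReal.ofReal (b^n * ωr) := by
        exact mul_le_mul_right hAbvol _
    _ = ENNReal.ofReal ((1 - lam^n) * (b^n * ωr)) :=
        (ENNReal.ofReal_mul (by linarith : (0:ℝ) ≤ 1 - lam^n)).symm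
    _ ≤ ENNReal.ofReal (CT * (D * b^(n-1))) := ENNReal.ofReal_le_ofReal hreal
  · -- ball case
    push_neg at hcase
    have hrD : r < D / ε := by rw [lt_div_iff₀ hε]; nlinarith
    have hbD : b ≤ (1+ε)/ε * D := by
      rw [hbdef, div_mul_eq_mul_div, le_div_iff₀ hε]
      nlinarith
    have hreal : b^n * ωr ≤ CT * (D * b^(n-1)) := by
      calc b^n * ωr = b * (b^(n-1) * ωr) := by rw [hbpow]; ring
      _ ≤ ((1+ε)/ε * D) * (b^(n-1) * ωr) := by
          apply mul_le_mul_of_nonneg_right hbD (by positivity)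
      _ = ((1+ε)/ε*ωr) * (D * b^(n-1)) := by ring
      _ ≤ CT * (D * b^(n-1)) := by
          apply mul_le_mul_of_nonneg_right ?_ hDP
          rw [hCT]
          have h1 : 0 ≤ 6*n*ωr/(1-q) := by
            apply div_nonneg (by positivity) (by linarith)
          linarith
    calc volume T ≤ volume Ab := measure_mono hTAb
    _ ≤ ENNReal.ofReal (b^n * ωr) := hAbvol
    _ ≤ ENNReal.ofReal (CT * (D * b^(n-1))) := ENNReal.ofReal_le_ofReal hreal

end VolT

section Main
variable {n m : ℕ} {A : EuclideanSpace ℝ (Fin n) → EuclideanSpace ℝ (Fin m)} {L : ℝ≥0}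

lemma cont_piH : Continuous (piH n m) := by
  have : LipschitzWith 1 (piH n m) := by
    apply LipschitzWith.of_dist_le_mul
    intro x y
    rw [NNReal.coe_one, one_mul]
    apply le_of_sq_le_sq' dist_nonneg
    rw [dist_sq_split x y]
    nlinarith [sq_nonneg (dist (piV n m x) (piV n m y)), sq_nonneg (dist (piH n m x) (piH n m y))]
  exact this.continuous

lemma cont_piV : Continuous (piV n m) := by
  have : LipschitzWith 1 (piV n m) := by
    apply LipschitzWith.of_dist_le_mul
    intro x y
    rw [NNReal.coe_one, one_mul]
    apply le_of_sq_le_sq' dist_nonneg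
    rw [dist_sq_split x y]
    nlinarith [sq_nonneg (dist (piV n m x) (piV n m y)), sq_nonneg (dist (piH n m x) (piH n m y))]
  exact this.continuous

theorem stmt15' (hn : 1 ≤ n) (hm : 1 ≤ m) (hL : L < 1) (hA : LipschitzWith L A) :
    ∃ C > (0 : ℝ), ∀ (k : ℤ) (c : EuclideanSpace ℝ (Fin (n + m))) (l : ℝ),
      0 < l → l < (2 : ℝ) ^ (-k + 1) →
      (∃ u, piV n m u = A (piH n m u) ∧ u ∈ cube (n + m) c ((9 / 10) * l)) →
      (μH[n]).restrict {x | piV n m x = A (piH n m x)}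
          {x' | (cube (n + m) c l ∩
            (sphere x' ((2 : ℝ) ^ (-k - 1)) ∪ sphere x' ((2 : ℝ) ^ (-k)))).Nonempty}
        ≤ ENNReal.ofReal (C * l * (2 : ℝ) ^ (-k * ((n : ℤ) - 1))) := by
  obtain ⟨K, hKfin, hK⟩ := hausdorff_le_const_vol n
  obtain ⟨CT, hCT0, hCTb⟩ := volT (m := m) (A := A) hn hA hL
  set KΦ : ℝ≥0∞ := ((NNReal.sqrt (1 + L^2) : ℝ≥0) : ℝ≥0∞) ^ (n:ℝ) with hKΦdef
  have hKΦfin : KΦ ≠ ∞ :=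
    (ENNReal.rpow_lt_top_of_nonneg (by positivity) ENNReal.coe_ne_top).ne
  set Dc : ℝ := Real.sqrt ((n:ℝ) + m) with hDcdef
  have hnm1 : (1:ℝ) ≤ (n:ℝ) + m := by
    have : (1:ℝ) ≤ (n:ℝ) := by exact_mod_cast hn
    have : (0:ℝ) ≤ (m:ℝ) := by positivity
    linarith
  have hDc0 : 0 < Dc := Real.sqrt_pos.2 (by linarith)
  have hDcsq : Dc^2 = (n:ℝ) + m := Real.sq_sqrt (by linarith)
  set C4 : ℝ := CT * Dc * (1 + 2*Dc)^(n-1) with hC4def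
  have hC40 : 0 < C4 := by positivity
  set M : ℝ≥0∞ := 2 * KΦ * K * ENNReal.ofReal C4 with hMdef
  have hMfin : M ≠ ∞ := by
    rw [hMdef]
    exact ENNReal.mul_ne_top (ENNReal.mul_ne_top
      (ENNReal.mul_ne_top (by simp) hKΦfin) hKfin) ENNReal.ofReal_ne_top
  refine ⟨M.toReal + 1, by positivity, ?_⟩
  intro k c l hl hlt ⟨u, hu, hucube⟩
  have hΓmeas : MeasurableSet {x : EuclideanSpace ℝ (Fin (n+m)) | piV n m x = A (piH n m x)} :=
    (isClosed_eq cont_piV (hA.continuous.comp cont_piH)).measurableSet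
  rw [Measure.restrict_apply' hΓmeas]
  set r₁ : ℝ := (2:ℝ) ^ (-k-1) with hr₁def
  set r₂ : ℝ := (2:ℝ) ^ (-k) with hr₂def
  have hr₁0 : 0 < r₁ := by positivity
  have hr₂0 : 0 < r₂ := by positivity
  have hr₁₂ : r₁ ≤ r₂ := by
    apply zpow_le_zpow_right₀ one_le_two; omega
  set D : ℝ := Dc * l with hDdef
  have hD0 : 0 < D := by positivity
  -- distance from cube points to u
  have hdzu : ∀ z ∈ cube (n+m) c l, dist z u ≤ D := by
    intro z hz
    have hco : ∀ i, |z i - u i| ≤ l := by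
      intro i
      have h1 : |z i - u i| ≤ |z i - c i| + |c i - u i| := abs_sub_le _ _ _
      have h2 : |z i - c i| ≤ l / 2 := hz i
      have h3 : |c i - u i| ≤ (9/10*l)/2 := by
        rw [abs_sub_comm]; exact hucube i
      linarith
    apply le_of_sq_le_sq' (by positivity)
    have hsum : dist z u ^ 2 ≤ ((n:ℝ) + m) * l^2 := by
      rw [EuclideanSpace.dist_eq, Real.sq_sqrt (by positivity)]
      calc ∑ i, dist (z i) (u i) ^ 2 ≤ ∑ _i : Fin (n+m), l^2 := by
            apply Finset.sum_le_sum
            intro i _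
            rw [Real.dist_eq]
            exact pow_le_pow_left₀ (abs_nonneg _) (hco i) 2
      _ = ((n:ℝ) + m) * l^2 := by
            rw [Finset.sum_const, Finset.card_univ, Fintype.card_fin, nsmul_eq_mul]
            push_cast; ring
    calc dist z u ^ 2 ≤ ((n:ℝ)+m) * l^2 := hsum
    _ = D^2 := by rw [hDdef, mul_pow, hDcsq]
  -- the two shells
  set T1 := {y : EuclideanSpace ℝ (Fin n) |
    r₁ - D ≤ dist (Phi A y) u ∧ dist (Phi A y) u ≤ r₁ + D} with hT1def
  set T2 := {y : EuclideanSpace ℝ (Fin n) |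
    r₂ - D ≤ dist (Phi A y) u ∧ dist (Phi A y) u ≤ r₂ + D} with hT2def
  have hcont : Continuous fun y : EuclideanSpace ℝ (Fin n) => dist (Phi A y) u :=
    ((lip_phi hA).continuous).dist continuous_const
  have hmeasT1 : MeasurableSet T1 :=
    ((isClosed_le continuous_const hcont).inter (isClosed_le hcont continuous_const)).measurableSet
  have hmeasT2 : MeasurableSet T2 :=
    ((isClosed_le continuous_const hcont).inter (isClosed_le hcont continuous_const)).measurableSet
  -- inclusion
  have hincl : {x' : EuclideanSpace ℝ (Fin (n+m)) | (cube (n + m) c l ∩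
        (sphere x' r₁ ∪ sphere x' r₂)).Nonempty} ∩
        {x | piV n m x = A (piH n m x)} ⊆ (Phi A '' T1) ∪ (Phi A '' T2) := by
    rintro x' ⟨⟨z, hzc, hzs⟩, hxg⟩
    have hxeq : Phi A (piH n m x') = x' := phi_piH hxg
    have hzu : dist z u ≤ D := hdzu z hzc
    rcases hzs with hzs | hzs
    · left
      refine ⟨piH n m x', ?_, hxeq⟩
      have hdzx : dist z x' = r₁ := mem_sphere.1 hzs
      constructor
      · rw [hxeq]
        have h1 : dist z x' ≤ dist z u + dist u x' := dist_triangle _ _ _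
        rw [dist_comm u x'] at h1
        linarith
      · rw [hxeq]
        calc dist x' u ≤ dist x' z + dist z u := dist_triangle _ _ _
        _ ≤ r₁ + D := by rw [dist_comm x' z]; linarith [hdzx, hzu]
    · right
      refine ⟨piH n m x', ?_, hxeq⟩
      have hdzx : dist z x' = r₂ := mem_sphere.1 hzs
      constructor
      · rw [hxeq]
        have h1 : dist z x' ≤ dist z u + dist u x' := dist_triangle _ _ _
        rw [dist_comm u x'] at h1
        linarith
      · rw [hxeq]
        calc dist x' u ≤ dist x' z + dist z u := dist_triangle _ _ _
        _ ≤ r₂ + D := by rw [dist_comm x' z]; linarith [hdzx, hzu]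
  have hz1 : ((2:ℝ)^(-k))^(n-1) = (2:ℝ)^(-k * ((n:ℤ)-1)) := by
    rw [← zpow_natCast ((2:ℝ)^(-k)) (n-1), ← zpow_mul]
    congr 1
    rw [Nat.cast_sub hn]; push_cast; ring
  set Z : ℝ := (2:ℝ)^(-k * ((n:ℤ)-1)) with hZdef
  have hZ0 : 0 < Z := by positivity
  have hl2 : l ≤ 2 * r₂ := by
    have h2r : (2:ℝ)^(-k+1) = 2 * r₂ := by
      rw [hr₂def, zpow_add₀ (two_ne_zero : (2:ℝ) ≠ 0), zpow_one]; ring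
    linarith [hlt, h2r.le]
  have hri : ∀ r : ℝ, 0 < r → r ≤ r₂ → CT * (D * (r + D)^(n-1)) ≤ C4 * (l * Z) := by
    intro r hr0 hrr
    have hDb : D ≤ 2*Dc*r₂ := by
      rw [hDdef]
      calc Dc * l ≤ Dc * (2*r₂) := mul_le_mul_of_nonneg_left hl2 hDc0.le
      _ = 2*Dc*r₂ := by ring
    have hrD : r + D ≤ r₂ * (1 + 2*Dc) := by nlinarith
    have hpow : (r + D)^(n-1) ≤ (r₂*(1+2*Dc))^(n-1) :=
      pow_le_pow_left₀ (by positivity) hrD _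
    have hsplit : (r₂*(1+2*Dc))^(n-1) = Z * (1+2*Dc)^(n-1) := by
      rw [mul_pow, hr₂def, hz1]
    calc CT * (D * (r+D)^(n-1)) ≤ CT * (D * (Z * (1+2*Dc)^(n-1))) := by
          apply mul_le_mul_of_nonneg_left ?_ hCT0.le
          apply mul_le_mul_of_nonneg_left ?_ hD0.le
          rw [← hsplit]; exact hpow
    _ = C4 * (l * Z) := by rw [hC4def, hDdef]; ring
  have hbound : ∀ (r : ℝ) (T : Set (EuclideanSpace ℝ (Fin n))), 0 < r → r ≤ r₂ →
      MeasurableSet T →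
      T = {y | r - D ≤ dist (Phi A y) u ∧ dist (Phi A y) u ≤ r + D} →
      μH[(n:ℝ)] (Phi A '' T) ≤ KΦ * (K * ENNReal.ofReal (C4 * (l * Z))) := by
    intro r T hr0 hrr hTm hTeq
    calc μH[(n:ℝ)] (Phi A '' T) ≤ KΦ * μH[(n:ℝ)] T :=
        (lip_phi hA).hausdorffMeasure_image_le (by positivity) T
    _ ≤ KΦ * (K * volume T) := mul_le_mul_right (hK T hTm) _
    _ ≤ KΦ * (K * ENNReal.ofReal (CT * (D * (r+D)^(n-1)))) := by
        apply mul_le_mul_right; apply mul_le_mul_right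
        rw [hTeq]; exact hCTb u hu r D hr0 hD0
    _ ≤ KΦ * (K * ENNReal.ofReal (C4 * (l * Z))) := by
        apply mul_le_mul_right; apply mul_le_mul_right
        exact ENNReal.ofReal_le_ofReal (hri r hr0 hrr)
  calc μH[(n:ℝ)] ({x' : EuclideanSpace ℝ (Fin (n+m)) | (cube (n + m) c l ∩
        (sphere x' r₁ ∪ sphere x' r₂)).Nonempty} ∩
        {x | piV n m x = A (piH n m x)})
      ≤ μH[(n:ℝ)] ((Phi A '' T1) ∪ (Phi A '' T2)) := measure_mono hincl
  _ ≤ μH[(n:ℝ)] (Phi A '' T1) + μH[(n:ℝ)] (Phi A '' T2) := measure_union_le _ _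
  _ ≤ KΦ * (K * ENNReal.ofReal (C4 * (l * Z))) + KΦ * (K * ENNReal.ofReal (C4 * (l * Z))) :=
      add_le_add (hbound r₁ T1 hr₁0 hr₁₂ hmeasT1 hT1def) (hbound r₂ T2 hr₂0 le_rfl hmeasT2 hT2def)
  _ = M * ENNReal.ofReal (l * Z) := by
      rw [hMdef, ENNReal.ofReal_mul hC40.le]; ring
  _ ≤ ENNReal.ofReal ((M.toReal + 1) * l * Z) := by
      have hM1 : M ≤ ENNReal.ofReal (M.toReal + 1) := by
        calc M = ENNReal.ofReal M.toReal := (ENNReal.ofReal_toReal hMfin).symm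
        _ ≤ ENNReal.ofReal (M.toReal + 1) := ENNReal.ofReal_le_ofReal (by linarith)
      calc M * ENNReal.ofReal (l * Z) ≤ ENNReal.ofReal (M.toReal + 1) * ENNReal.ofReal (l * Z) :=
          mul_le_mul_left hM1 _
      _ = ENNReal.ofReal ((M.toReal + 1) * (l * Z)) :=
          (ENNReal.ofReal_mul (by positivity)).symm
      _ = ENNReal.ofReal ((M.toReal + 1) * l * Z) := by rw [mul_assoc]
end Main

/-- If `Γ` is a Lipschitz graph of slope `< 1` with `μ := ℋ^n_Γ`, `R_j`
is a cube of side `ℓ(R_j) < 2^{−k+1}` whose contraction `(9/10)R_j` meets `supp μ`, and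
`θ^j_k(x')` is the indicator that `R_j` meets `∂A(x', 2^{−k−1}, 2^{−k})` (the union of the
two bounding spheres), then `∫ θ^j_k dμ ≤ C ℓ(R_j) 2^{−k(n−1)}`, with `C` depending only
on `n`, `d`, `Lip(𝒜)`. -/
theorem stmt15 (n m : ℕ) (hn : 1 ≤ n) (hm : 1 ≤ m)
    (A : EuclideanSpace ℝ (Fin n) → EuclideanSpace ℝ (Fin m)) (L : ℝ≥0) (hL : L < 1)
    (hA : LipschitzWith L A) :
    ∃ C > (0 : ℝ), ∀ (k : ℤ) (c : EuclideanSpace ℝ (Fin (n + m))) (l : ℝ),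
      0 < l → l < (2 : ℝ) ^ (-k + 1) →
      (∃ u, piV n m u = A (piH n m u) ∧ u ∈ cube (n + m) c ((9 / 10) * l)) →
      (μH[n]).restrict {x | piV n m x = A (piH n m x)}
          {x' | (cube (n + m) c l ∩
            (sphere x' ((2 : ℝ) ^ (-k - 1)) ∪ sphere x' ((2 : ℝ) ^ (-k)))).Nonempty}
        ≤ ENNReal.ofReal (C * l * (2 : ℝ) ^ (-k * ((n : ℤ) - 1))) :=
  stmt15' hn hm hL hA
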